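/- Let a > 0 and 0 < b ≤ (√a/I₁(√a))·√(2I₀(√a)-1)/(I₀(√a)-1). Then the solution h of the corneal boundary value problem satisfies (2 - 1/I₀(√a))·h₀'(r) ≤ h'(r) ≤ 0 for all r ∈ [0,1], where h₀(r) = (b/a)(1 - I₀(√a r)/I₀(√a)). In particular h is nonincreasing. -/

import Mathlib

open Real MeasureTheory Set Filter Topology

/-- Modified Bessel function of the first kind, order 0. -/
noncomputable def besselI0 (z : ℝ) : ℝ :=
  ∑' k : ℕ, (z / 2) ^ (2 * k) / ((Nat.factorial k : ℝ) * Nat.factorial k)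

/-- Modified Bessel function of the first kind, order 1. -/
noncomputable def besselI1 (z : ℝ) : ℝ :=
  ∑' k : ℕ, (z / 2) ^ (2 * k + 1) / ((Nat.factorial k : ℝ) * Nat.factorial (k + 1))

/-- Modified Bessel function of the first kind, order 2. -/
noncomputable def besselI2 (z : ℝ) : ℝ :=
  ∑' k : ℕ, (z / 2) ^ (2 * k + 2) / ((Nat.factorial k : ℝ) * Nat.factorial (k + 2))

/-- Modified Bessel function of the second kind, order 0 (integral representation). -/
noncomputable def besselK0 (z : ℝ) : ℝ :=
  ∫ t in Set.Ioi (0 : ℝ), Real.exp (-z * Real.cosh t)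

/-- Modified Bessel function of the second kind, order 1 (integral representation). -/
noncomputable def besselK1 (z : ℝ) : ℝ :=
  ∫ t in Set.Ioi (0 : ℝ), Real.exp (-z * Real.cosh t) * Real.cosh t

noncomputable def Pfun (x : ℝ) : ℝ := 1 / Real.sqrt (1 + x ^ 2)

noncomputable def v0 (a r : ℝ) : ℝ := besselI0 (Real.sqrt a * r)

noncomputable def v1 (a r : ℝ) : ℝ :=
  besselI0 (Real.sqrt a) * besselK0 (Real.sqrt a * r)
    - besselI0 (Real.sqrt a * r) * besselK0 (Real.sqrt a)

noncomputable def Fker (a b r t : ℝ) : ℝ :=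
  (b / besselI0 (Real.sqrt a)) *
    ((if t ∈ Set.Icc r 1 then t * v0 a r * v1 a t else 0)
      + (if t ∈ Set.Icc 0 r then t * v0 a t * v1 a r else 0))

/-- Picard iterates: `h₀(r) = (b/a)(1 - I₀(√a r)/I₀(√a))`,
`hₙ(r) = ∫₀¹ F(r,t) P(h'_{n-1}(t)) dt`. -/
noncomputable def picard (a b : ℝ) : ℕ → ℝ → ℝ
  | 0 => fun r => (b / a) * (1 - besselI0 (Real.sqrt a * r) / besselI0 (Real.sqrt a))
  | n + 1 => fun r => ∫ t in (0 : ℝ)..1, Fker a b r t * Pfun (deriv (picard a b n) t)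

/-- `h` solves the corneal boundary value problem
`-(1/r)(r h')' + a h = b/√(1 + h'²)` on `(0,1)`, `h'(0) = 0`, `h(1) = 0`. -/
def SolvesBVP (a b : ℝ) (h : ℝ → ℝ) : Prop :=
  ContDiffOn ℝ 2 h (Set.Icc 0 1) ∧
  (∀ r ∈ Set.Ioo (0 : ℝ) 1,
    -(1 / r) * deriv (fun s : ℝ => s * deriv h s) r + a * h r
      = b / Real.sqrt (1 + (deriv h r) ^ 2)) ∧
  deriv h 0 = 0 ∧ h 1 = 0


section Aux
open Real Set Filter Topology
lemma fact_pos' (k : ℕ) : (0:ℝ) < (Nat.factorial k : ℝ) := by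
  exact_mod_cast Nat.factorial_pos k

lemma fact_one_le (k : ℕ) : (1:ℝ) ≤ (Nat.factorial k : ℝ) := by
  exact_mod_cast Nat.one_le_iff_ne_zero.2 (Nat.factorial_ne_zero k)

lemma I0term_nonneg (z : ℝ) (k : ℕ) :
    0 ≤ (z / 2) ^ (2 * k) / ((Nat.factorial k : ℝ) * Nat.factorial k) := by
  apply div_nonneg
  · rw [pow_mul]; positivity
  · positivity

lemma summable_I0_terms (z : ℝ) :
    Summable (fun k : ℕ => (z / 2) ^ (2 * k) / ((Nat.factorial k : ℝ) * Nat.factorial k)) := by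
  refine Summable.of_nonneg_of_le (I0term_nonneg z) (fun k => ?_)
    (Real.summable_pow_div_factorial (z^2/4))
  rw [pow_mul]
  have h1 : (z/2)^2 = z^2/4 := by ring
  rw [h1]
  refine div_le_div_of_nonneg_left (by positivity) (fact_pos' k) ?_
  nlinarith [fact_pos' k, fact_one_le k]

lemma summable_I1_terms (z : ℝ) :
    Summable (fun k : ℕ => (z / 2) ^ (2 * k + 1) / ((Nat.factorial k : ℝ) * Nat.factorial (k+1))) := by
  apply Summable.of_norm
  refine Summable.of_nonneg_of_le (fun k => norm_nonneg _) (fun k => ?_)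
    ((Real.summable_pow_div_factorial (z^2/4)).mul_left (|z|/2))
  have hden : (0:ℝ) < (Nat.factorial k : ℝ) * Nat.factorial (k+1) := by
    have := fact_pos' k; have := fact_pos' (k+1); positivity
  have h1 : ‖(z / 2) ^ (2 * k + 1) / ((Nat.factorial k : ℝ) * Nat.factorial (k+1))‖
      = (|z|/2)^(2*k+1) / ((Nat.factorial k : ℝ) * Nat.factorial (k+1)) := by
    rw [Real.norm_eq_abs, abs_div, abs_pow, abs_div, abs_of_nonneg hden.le]
    norm_num
  rw [h1, pow_succ, pow_mul]
  have h2 : (|z|/2)^2 = z^2/4 := by rw [div_pow, sq_abs]; norm_num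
  rw [h2, mul_comm ((z^2/4)^k) (|z|/2), mul_div_assoc]
  refine mul_le_mul_of_nonneg_left ?_ (by positivity)
  refine div_le_div_of_nonneg_left (by positivity) (fact_pos' k) ?_
  nlinarith [fact_pos' k, fact_one_le (k+1), fact_pos' (k+1), fact_one_le k]

lemma besselI0_ge_one (z : ℝ) : 1 ≤ besselI0 z := by
  have h := Summable.tsum_eq_zero_add (summable_I0_terms z)
  have h0 : (z / 2) ^ (2 * 0) / ((Nat.factorial 0 : ℝ) * Nat.factorial 0) = 1 := by norm_num
  calc (1:ℝ) = (z / 2) ^ (2 * 0) / ((Nat.factorial 0 : ℝ) * Nat.factorial 0) := h0.symm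
  _ ≤ besselI0 z := by
      unfold besselI0
      rw [h, h0]
      have : 0 ≤ ∑' k : ℕ, (z / 2) ^ (2 * (k+1)) / ((Nat.factorial (k+1) : ℝ) * Nat.factorial (k+1)) :=
        tsum_nonneg (fun k => I0term_nonneg z (k+1))
      linarith

lemma besselI0_pos (z : ℝ) : 0 < besselI0 z := lt_of_lt_of_le one_pos (besselI0_ge_one z)

lemma besselI0_gt_one {z : ℝ} (hz : 0 < z) : 1 < besselI0 z := by
  have h := Summable.tsum_eq_zero_add (summable_I0_terms z)
  unfold besselI0
  rw [h]
  have h0 : (z / 2) ^ (2 * 0) / ((Nat.factorial 0 : ℝ) * Nat.factorial 0) = 1 := by norm_num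
  rw [h0]
  have h2 := Summable.tsum_eq_zero_add (f := fun k : ℕ =>
    (z / 2) ^ (2 * (k+1)) / ((Nat.factorial (k+1) : ℝ) * Nat.factorial (k+1)))
    ((summable_I0_terms z).comp_injective (add_left_injective 1))
  rw [h2]
  have h1 : (0:ℝ) < (z / 2) ^ (2 * (0+1)) / ((Nat.factorial (0+1) : ℝ) * Nat.factorial (0+1)) := by
    norm_num; positivity
  have h3 : 0 ≤ ∑' k : ℕ, (z / 2) ^ (2 * (k+1+1)) / ((Nat.factorial (k+1+1) : ℝ) * Nat.factorial (k+1+1)) :=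
    tsum_nonneg (fun k => I0term_nonneg z (k+1+1))
  linarith

lemma besselI1_ge {z : ℝ} (hz : 0 ≤ z) : z / 2 ≤ besselI1 z := by
  have h := Summable.tsum_eq_zero_add (summable_I1_terms z)
  unfold besselI1
  rw [h]
  have h0 : (z / 2) ^ (2 * 0 + 1) / ((Nat.factorial 0 : ℝ) * Nat.factorial (0+1)) = z/2 := by
    norm_num
  rw [h0]
  have : 0 ≤ ∑' k : ℕ, (z / 2) ^ (2 * (k+1) + 1) / ((Nat.factorial (k+1) : ℝ) * Nat.factorial (k+1+1)) := by
    refine tsum_nonneg (fun k => ?_)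
    have : (0:ℝ) ≤ (z/2) ^ (2*(k+1)+1) := by positivity
    positivity
  linarith

lemma besselI1_nonneg {z : ℝ} (hz : 0 ≤ z) : 0 ≤ besselI1 z := by
  have := besselI1_ge hz; linarith [div_nonneg hz (by norm_num : (0:ℝ) ≤ 2)]

lemma hasDerivAt_besselI0 (z : ℝ) : HasDerivAt besselI0 (besselI1 z) z := by
  set R : ℝ := |z| + 1 with hR
  have hRpos : 0 < R := by positivity
  have hzR : z ∈ Metric.ball (0:ℝ) R := by
    simp only [Metric.mem_ball, Real.dist_eq, sub_zero, hR]
    linarith [abs_nonneg z]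
  set u : ℕ → ℝ := fun k => (2/R) * ((R^2/2)^k / (Nat.factorial k : ℝ)) with hu
  have hus : Summable u := (Real.summable_pow_div_factorial (R^2/2)).mul_left _
  set g : ℕ → ℝ → ℝ := fun k x => (x / 2) ^ (2 * k) / ((Nat.factorial k : ℝ) * Nat.factorial k)
    with hg
  set g' : ℕ → ℝ → ℝ := fun k x => (k:ℝ) * (x / 2) ^ (2 * k - 1) / ((Nat.factorial k : ℝ) * Nat.factorial k)
    with hg'
  have hder : ∀ k : ℕ, ∀ x ∈ Metric.ball (0:ℝ) R, HasDerivAt (g k) (g' k x) x := by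
    intro k x _
    have h1 : HasDerivAt (fun x : ℝ => x / 2) (1/2) x := (hasDerivAt_id x).div_const 2
    have h2 := (h1.pow (2*k)).div_const ((Nat.factorial k : ℝ) * Nat.factorial k)
    refine h2.congr_deriv ?_
    rw [hg']
    push_cast
    ring
  have hbound : ∀ k : ℕ, ∀ x ∈ Metric.ball (0:ℝ) R, ‖g' k x‖ ≤ u k := by
    intro k x hx
    have hxR : |x| ≤ R := by
      have := mem_ball_iff_norm.1 hx
      simp only [sub_zero, Real.norm_eq_abs] at this
      linarith
    have hnorm : ‖g' k x‖ = (k:ℝ) * (|x| / 2) ^ (2 * k - 1) / ((Nat.factorial k : ℝ) * Nat.factorial k) := by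
      rw [hg']
      rw [Real.norm_eq_abs, abs_div, abs_mul, abs_pow, abs_div]
      simp [abs_of_nonneg (mul_nonneg (fact_pos' k).le (fact_pos' k).le), Nat.abs_cast]
    rw [hnorm]
    match k with
    | 0 => simp [hu]; positivity
    | (j+1) =>
      have he : 2 * (j+1) - 1 = 2*j + 1 := by omega
      rw [he]
      have hmono : (|x|/2)^(2*j+1) ≤ (R/2)^(2*j+1) := by
        apply pow_le_pow_left₀ (by positivity) (by linarith)
      have hRj : (R/2)^(2*j+1) = (2/R) * (R^2/4)^(j+1) := by
        have h5 : (R/2)^2 = R^2/4 := by ring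
        rw [pow_succ, pow_mul, h5, pow_succ]
        field_simp
        ring
      have hfact : ((j+1:ℕ):ℝ) * (Nat.factorial j : ℝ) = (Nat.factorial (j+1) : ℝ) := by
        rw [Nat.factorial_succ]; push_cast; ring
      -- target: (j+1) * (|x|/2)^(2j+1) / ((j+1)! * (j+1)!) ≤ (2/R) * ((R^2/2)^(j+1) / (j+1)!)
      have step1 : ((j+1:ℕ):ℝ) * (|x|/2)^(2*j+1) / ((Nat.factorial (j+1) : ℝ) * Nat.factorial (j+1))
          ≤ ((j+1:ℕ):ℝ) * ((2/R) * (R^2/4)^(j+1)) / ((Nat.factorial (j+1) : ℝ) * Nat.factorial (j+1)) := by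
        apply div_le_div_of_nonneg_right ?_ (by positivity)
        · apply mul_le_mul_of_nonneg_left (le_trans hmono (le_of_eq hRj)) (by positivity)
      refine le_trans step1 ?_
      rw [hu]
      rw [div_le_iff₀ (by positivity), ]
      have h4 : ((j+1:ℕ):ℝ) ≤ 2^(j+1) := by
        exact_mod_cast (Nat.lt_two_pow_self (n := j+1)).le
      have hfp := fact_pos' (j+1)
      have hfl := fact_one_le (j+1)
      have key : ((j+1:ℕ):ℝ) * (R^2/4)^(j+1) ≤ (R^2/2)^(j+1) * (Nat.factorial (j+1) : ℝ) := by
        have e1 : (R^2/2)^(j+1) = (R^2/4)^(j+1) * 2^(j+1) := by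
          have h6 : R^2/4 * 2 = R^2/2 := by ring
          rw [← mul_pow, h6]
        rw [e1]
        calc ((j+1:ℕ):ℝ) * (R^2/4)^(j+1) ≤ 2^(j+1) * (R^2/4)^(j+1) := by
              apply mul_le_mul_of_nonneg_right h4 (by positivity)
        _ = ((R^2/4)^(j+1) * 2^(j+1)) * 1 := by ring
        _ ≤ ((R^2/4)^(j+1) * 2^(j+1)) * (Nat.factorial (j+1) : ℝ) :=
              mul_le_mul_of_nonneg_left hfl (by positivity)
        _ = (R^2/4)^(j+1) * 2^(j+1) * (Nat.factorial (j+1) : ℝ) := by ring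
      calc ((j+1:ℕ):ℝ) * (2/R * (R^2/4)^(j+1)) = (2/R) * (((j+1:ℕ):ℝ) * (R^2/4)^(j+1)) := by ring
      _ ≤ (2/R) * ((R^2/2)^(j+1) * (Nat.factorial (j+1) : ℝ)) := by
            apply mul_le_mul_of_nonneg_left key (by positivity)
      _ = 2 / R * ((R ^ 2 / 2) ^ (j + 1) / ↑(Nat.factorial (j+1))) * (↑(Nat.factorial (j+1)) * ↑(Nat.factorial (j+1))) := by
            field_simp
  have hsum' : Summable (fun k => g' k z) := by
    apply Summable.of_norm
    exact Summable.of_nonneg_of_le (fun k => norm_nonneg _) (fun k => hbound k z hzR) hus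
  have main : HasDerivAt (fun y => ∑' k, g k y) (∑' k, g' k z) z :=
    hasDerivAt_tsum_of_isPreconnected hus Metric.isOpen_ball
      ((convex_ball (0:ℝ) R).isPreconnected) hder hbound hzR (summable_I0_terms z) hzR
  have hval : (∑' k, g' k z) = besselI1 z := by
    rw [Summable.tsum_eq_zero_add hsum']
    have h0 : g' 0 z = 0 := by simp [hg']
    rw [h0, zero_add]
    unfold besselI1
    apply tsum_congr
    intro j
    show ((j+1:ℕ):ℝ) * (z / 2) ^ (2 * (j+1) - 1) / ((Nat.factorial (j+1) : ℝ) * Nat.factorial (j+1))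
      = (z / 2) ^ (2 * j + 1) / ((Nat.factorial j : ℝ) * Nat.factorial (j + 1))
    have he : 2 * (j+1) - 1 = 2*j + 1 := by omega
    rw [he]
    rw [Nat.factorial_succ]
    push_cast
    have hfp := fact_pos' j
    field_simp
  rw [← hval]
  exact main

lemma hasDerivAt_id_mul_besselI1 (z : ℝ) :
    HasDerivAt (fun x => x * besselI1 x) (z * besselI0 z) z := by
  set R : ℝ := |z| + 1 with hR
  have hRpos : 0 < R := by positivity
  have hzR : z ∈ Metric.ball (0:ℝ) R := by
    simp only [Metric.mem_ball, Real.dist_eq, sub_zero, hR]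
    linarith [abs_nonneg z]
  set u : ℕ → ℝ := fun k => R * ((R^2/4)^k / (Nat.factorial k : ℝ)) with hu
  have hus : Summable u := (Real.summable_pow_div_factorial (R^2/4)).mul_left _
  set g : ℕ → ℝ → ℝ := fun k x => x * ((x / 2) ^ (2 * k + 1) / ((Nat.factorial k : ℝ) * Nat.factorial (k+1)))
    with hg
  set g' : ℕ → ℝ → ℝ := fun k x => x * (x / 2) ^ (2 * k) / ((Nat.factorial k : ℝ) * Nat.factorial k)
    with hg'
  have hder : ∀ k : ℕ, ∀ x ∈ Metric.ball (0:ℝ) R, HasDerivAt (g k) (g' k x) x := by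
    intro k x _
    have h1 : HasDerivAt (fun x : ℝ => x / 2) (1/2) x := (hasDerivAt_id x).div_const 2
    have h2 := ((hasDerivAt_id x).mul ((h1.pow (2*k+1)).div_const
      ((Nat.factorial k : ℝ) * Nat.factorial (k+1))))
    refine h2.congr_deriv ?_
    rw [hg']
    have he : 2*k+1-1 = 2*k := by omega
    rw [he]
    have hfs : (Nat.factorial (k+1) : ℝ) = (k+1) * Nat.factorial k := by
      rw [Nat.factorial_succ]; push_cast; ring
    have hfp := fact_pos' k
    have hfp1 := fact_pos' (k+1)
    simp only [Pi.pow_apply, id_eq, hfs]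
    field_simp [hfs]
    push_cast
    ring
  have hbound : ∀ k : ℕ, ∀ x ∈ Metric.ball (0:ℝ) R, ‖g' k x‖ ≤ u k := by
    intro k x hx
    have hxR : |x| ≤ R := by
      have := Metric.mem_ball.1 hx
      rw [Real.dist_eq, sub_zero] at this
      linarith
    have hnorm : ‖g' k x‖ = |x| * (|x| / 2) ^ (2 * k) / ((Nat.factorial k : ℝ) * Nat.factorial k) := by
      rw [hg', Real.norm_eq_abs, abs_div, abs_mul, abs_pow, abs_div]
      simp [abs_of_nonneg (mul_nonneg (fact_pos' k).le (fact_pos' k).le), Nat.abs_cast]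
    rw [hnorm, hu]
    have h1 : (|x|/2)^(2*k) = (x^2/4)^k := by
      rw [pow_mul]
      congr 1
      rw [div_pow, sq_abs]; norm_num
    rw [h1]
    have hx4R : (x^2/4)^k ≤ (R^2/4)^k := by
      have hq : x^2/4 ≤ R^2/4 := by nlinarith [abs_nonneg x, sq_abs x]
      exact pow_le_pow_left₀ (by positivity) hq k
    have hfl := fact_one_le k
    have hfp := fact_pos' k
    calc |x| * (x^2/4)^k / ((Nat.factorial k : ℝ) * Nat.factorial k)
        ≤ R * (R^2/4)^k / ((Nat.factorial k : ℝ) * Nat.factorial k) := by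
          apply div_le_div_of_nonneg_right ?_ (by positivity)
          apply mul_le_mul hxR hx4R (by positivity) (by positivity)
    _ ≤ R * ((R^2/4)^k / (Nat.factorial k : ℝ)) := by
          rw [mul_div_assoc]
          apply mul_le_mul_of_nonneg_left ?_ hRpos.le
          apply div_le_div_of_nonneg_left (by positivity) hfp
          nlinarith
  have main : HasDerivAt (fun y => ∑' k, g k y) (∑' k, g' k z) z := by
    apply hasDerivAt_tsum_of_isPreconnected hus Metric.isOpen_ball
      ((convex_ball (0:ℝ) R).isPreconnected) hder hbound hzR ?_ hzR
    rw [hg]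
    simp only []
    exact (summable_I1_terms z).mul_left z
  have hfun : (fun y => ∑' k, g k y) = (fun x => x * besselI1 x) := by
    funext y
    rw [hg]
    unfold besselI1
    exact tsum_mul_left
  have hval : (∑' k, g' k z) = z * besselI0 z := by
    rw [hg']
    unfold besselI0
    rw [← tsum_mul_left]
    apply tsum_congr
    intro k
    ring
  rw [← hfun, ← hval]
  exact main

lemma cmp_nonneg {φ φ' : ℝ → ℝ}
    (hd : ∀ r ∈ Ioo (0:ℝ) 1, HasDerivAt φ (φ' r) r)
    (hpos : ∀ r ∈ Ioo (0:ℝ) 1, 0 ≤ φ' r)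
    (h0 : Tendsto φ (𝓝[>] (0:ℝ)) (𝓝 0)) :
    ∀ r ∈ Ioo (0:ℝ) 1, 0 ≤ φ r := by
  have hmono : MonotoneOn φ (Ioo 0 1) := by
    apply monotoneOn_of_deriv_nonneg (convex_Ioo 0 1)
    · intro x hx; exact (hd x hx).differentiableAt.continuousAt.continuousWithinAt
    · intro x hx
      rw [interior_Ioo] at hx
      exact (hd x hx).differentiableAt.differentiableWithinAt
    · intro x hx
      rw [interior_Ioo] at hx
      rw [(hd x hx).deriv]
      exact hpos x hx
  intro r hr
  apply le_of_tendsto h0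
  filter_upwards [Ioo_mem_nhdsGT hr.1] with t ht
  exact hmono ⟨ht.1, ht.2.trans hr.2⟩ hr ht.2.le

lemma max_principle {a : ℝ} (ha : 0 < a) {z ψ : ℝ → ℝ}
    (hzc : ContinuousOn z (Icc 0 1))
    (hu : ∀ r ∈ Ioo (0:ℝ) 1, HasDerivAt (fun s => s * deriv z s) (ψ r) r)
    (hψ : ∀ r ∈ Ioo (0:ℝ) 1, ψ r ≤ a * r * z r)
    (h0 : Tendsto (fun r => r * deriv z r) (𝓝[>] (0:ℝ)) (𝓝 0))
    (h1 : 0 ≤ z 1) :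
    ∀ r ∈ Icc (0:ℝ) 1, 0 ≤ z r := by
  by_contra hcon
  push_neg at hcon
  obtain ⟨r₂, hr₂, hr₂neg⟩ := hcon
  obtain ⟨rs, hrs, hmin⟩ := isCompact_Icc.exists_isMinOn (nonempty_Icc.2 zero_le_one) hzc
  have hzrs : z rs < 0 := lt_of_le_of_lt (hmin hr₂) hr₂neg
  -- helper : if deriv z < 0 on an open subinterval (p,q) ⊆ [0,1] with p,q ∈ [0,1], get z q < z p
  have decr : ∀ p q : ℝ, 0 ≤ p → p < q → q ≤ 1 →
      (∀ s ∈ Ioo p q, deriv z s < 0) → z q < z p := by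
    intro p q hp hpq hq hneg
    have hsub : Icc p q ⊆ Icc 0 1 := Icc_subset_Icc hp hq
    have : StrictAntiOn z (Icc p q) := by
      apply strictAntiOn_of_deriv_neg (convex_Icc p q) (hzc.mono hsub)
      intro x hx
      rw [interior_Icc] at hx
      exact hneg x hx
    exact this (left_mem_Icc.2 hpq.le) (right_mem_Icc.2 hpq.le) hpq
  rcases eq_or_lt_of_le hrs.1 with h0rs | h0rs
  · -- rs = 0
    have hz0 : z 0 < 0 := by rwa [← h0rs] at hzrs
    -- find δ ∈ (0,1) with z < 0 on [0,δ]
    have hev : ∀ᶠ s in 𝓝[Icc (0:ℝ) 1] 0, z s < 0 := by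
      have hc : ContinuousWithinAt z (Icc 0 1) 0 := hzc 0 (left_mem_Icc.2 zero_le_one)
      exact hc.eventually_lt_const hz0
    rw [nhdsWithin_Icc_eq_nhdsGE zero_lt_one] at hev
    obtain ⟨δ₀, hδ₀pos, hIcc⟩ := mem_nhdsGE_iff_exists_Icc_subset.1 hev
    set δ : ℝ := min δ₀ (1/2) with hδ
    have hδpos : 0 < δ := lt_min hδ₀pos (by norm_num)
    have hδlt1 : δ < 1 := lt_of_le_of_lt (min_le_right _ _) (by norm_num)
    have hzneg : ∀ s ∈ Icc 0 δ, z s < 0 := by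
      intro s hs
      exact hIcc ⟨hs.1, le_trans hs.2 (min_le_left _ _)⟩
    -- u strictly decreasing on (0,δ)
    set u : ℝ → ℝ := fun s => s * deriv z s with hudef
    have hanti : StrictAntiOn u (Ioo 0 δ) := by
      apply strictAntiOn_of_deriv_neg (convex_Ioo 0 δ)
      · intro x hx
        exact (hu x ⟨hx.1, hx.2.trans hδlt1⟩).differentiableAt.continuousAt.continuousWithinAt
      · intro x hx
        rw [interior_Ioo] at hx
        have hx' : x ∈ Ioo (0:ℝ) 1 := ⟨hx.1, hx.2.trans hδlt1⟩
        rw [(hu x hx').deriv]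
        calc ψ x ≤ a * x * z x := hψ x hx'
        _ < 0 := mul_neg_of_pos_of_neg (mul_pos ha hx.1) (hzneg x ⟨hx.1.le, hx.2.le⟩)
    have hule : ∀ s ∈ Ioo (0:ℝ) δ, u s ≤ 0 := by
      intro s hs
      apply ge_of_tendsto h0
      filter_upwards [Ioo_mem_nhdsGT hs.1] with t ht
      exact (hanti ⟨ht.1, ht.2.trans hs.2⟩ hs ht.2).le
    have hult : ∀ s ∈ Ioo (0:ℝ) δ, u s < 0 := by
      intro s hs
      have h2 : s/2 ∈ Ioo (0:ℝ) δ := ⟨by linarith [hs.1], by linarith [hs.2, hs.1]⟩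
      calc u s < u (s/2) := hanti h2 hs (by linarith [hs.1])
      _ ≤ 0 := hule _ h2
    have hdz : ∀ s ∈ Ioo (0:ℝ) δ, deriv z s < 0 := by
      intro s hs
      have h5 : s * deriv z s < 0 := hult s hs
      by_contra hcon2
      push_neg at hcon2
      nlinarith [hs.1]
    have hdecr := decr 0 δ le_rfl hδpos hδlt1.le hdz
    have hmin0 : z rs ≤ z δ := hmin ⟨hδpos.le, hδlt1.le⟩
    have hz0rs : z 0 = z rs := congrArg z h0rs
    linarith
  · rcases eq_or_lt_of_le hrs.2 with h1rs | h1rs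
    · rw [h1rs] at hzrs; linarith
    · -- interior case
      have hrs' : rs ∈ Ioo (0:ℝ) 1 := ⟨h0rs, h1rs⟩
      have hloc : IsLocalMin z rs := hmin.isLocalMin (Icc_mem_nhds h0rs h1rs)
      have hdz0 : deriv z rs = 0 := hloc.deriv_eq_zero
      set u : ℝ → ℝ := fun s => s * deriv z s with hudef
      have hurs : u rs = 0 := by rw [hudef]; simp [hdz0]
      have hψneg : ψ rs < 0 := by
        have h5 := hψ rs hrs'
        have h6 : a * rs * z rs < 0 := mul_neg_of_pos_of_neg (mul_pos ha h0rs) hzrs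
        linarith
      -- eventually u < 0 to the right of rs
      have hslope := hasDerivAt_iff_tendsto_slope.1 (hu rs hrs')
      have hev : ∀ᶠ s in 𝓝[>] rs, slope u rs s < 0 := by
        have hsub : (𝓝[>] rs) ≤ (𝓝[≠] rs) := by
          apply nhdsWithin_mono
          intro x hx
          simp only [mem_compl_iff, mem_singleton_iff]
          exact ne_of_gt hx
        exact (hslope.mono_left hsub).eventually_lt_const hψneg
      have hev2 : ∀ᶠ s in 𝓝[>] rs, u s < 0 := by
        filter_upwards [hev, self_mem_nhdsWithin] with s hs hs2
        have hgt : rs < s := hs2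
        rw [slope_def_field, hurs] at hs
        rcases div_neg_iff.1 hs with ⟨_, hlt⟩ | ⟨hlt, _⟩
        · linarith [sub_pos.2 hgt]
        · linarith
      obtain ⟨c, hc, hcsub⟩ := mem_nhdsGT_iff_exists_Ioo_subset.1 hev2
      set q : ℝ := min c 1 with hq
      have hrsq : rs < q := lt_min hc h1rs
      have hdzneg : ∀ s ∈ Ioo rs q, deriv z s < 0 := by
        intro s hs
        have husneg : s * deriv z s < 0 := hcsub ⟨hs.1, hs.2.trans_le (min_le_left _ _)⟩
        by_contra hcon2
        push_neg at hcon2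
        nlinarith [lt_trans h0rs hs.1]
      have := decr rs q h0rs.le hrsq (min_le_right _ _) hdzneg
      have hminq : z rs ≤ z q := hmin ⟨le_trans h0rs.le hrsq.le, min_le_right _ _⟩
      linarith

end Aux

section MainAux
open Real Set Filter Topology

lemma besselI1_zero : besselI1 0 = 0 := by
  unfold besselI1
  have : ∀ k : ℕ, ((0:ℝ) / 2) ^ (2 * k + 1) / ((Nat.factorial k : ℝ) * Nat.factorial (k + 1)) = 0 := by
    intro k
    rw [zero_div, zero_pow (by omega)]
    simp
  rw [tsum_congr this, tsum_zero]

lemma hasDerivAt_h0f (a b : ℝ) (ha : 0 < a) (r : ℝ) :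
    HasDerivAt (fun r => (b/a) * (1 - besselI0 (Real.sqrt a * r) / besselI0 (Real.sqrt a)))
      (-(b / Real.sqrt a) * besselI1 (Real.sqrt a * r) / besselI0 (Real.sqrt a)) r := by
  set sa := Real.sqrt a with hsa
  have hsapos : 0 < sa := Real.sqrt_pos.2 ha
  have hsq : sa * sa = a := Real.mul_self_sqrt ha.le
  have hI0pos : 0 < besselI0 sa := besselI0_pos sa
  have hinner : HasDerivAt (fun r : ℝ => sa * r) sa r := by
    simpa using (hasDerivAt_id r).const_mul sa
  have h1 : HasDerivAt (fun r : ℝ => besselI0 (sa * r)) (besselI1 (sa * r) * sa) r :=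
    (hasDerivAt_besselI0 (sa * r)).comp r hinner
  have h2 := ((h1.div_const (besselI0 sa)).const_sub 1).const_mul (b/a)
  refine h2.congr_deriv ?_
  rw [← hsq]
  field_simp

lemma hasDerivAt_r_h0d (a b : ℝ) (ha : 0 < a) (r : ℝ) :
    HasDerivAt (fun s => s * (-(b / Real.sqrt a) * besselI1 (Real.sqrt a * s) / besselI0 (Real.sqrt a)))
      (r * (a * ((b/a) * (1 - besselI0 (Real.sqrt a * r) / besselI0 (Real.sqrt a))) - b)) r := by
  set sa := Real.sqrt a with hsa
  have hsapos : 0 < sa := Real.sqrt_pos.2 ha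
  have hsq : sa * sa = a := Real.mul_self_sqrt ha.le
  have hI0pos : 0 < besselI0 sa := besselI0_pos sa
  have heq : (fun s : ℝ => s * (-(b / sa) * besselI1 (sa * s) / besselI0 sa))
      = fun s : ℝ => (-(b / (sa * sa) / besselI0 sa)) * ((sa * s) * besselI1 (sa * s)) := by
    funext s
    field_simp
  rw [heq]
  have hinner : HasDerivAt (fun s : ℝ => sa * s) sa r := by
    simpa using (hasDerivAt_id r).const_mul sa
  have h1 : HasDerivAt (fun s : ℝ => (sa * s) * besselI1 (sa * s))
      ((sa * r) * besselI0 (sa * r) * sa) r := by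
    have h1a := (hasDerivAt_id_mul_besselI1 (sa * r)).comp r hinner
    exact h1a
  have h2 := h1.const_mul (-(b / (sa * sa) / besselI0 sa))
  refine h2.congr_deriv ?_
  rw [← hsq]
  have ha' : sa * sa ≠ 0 := by positivity
  field_simp
  ring

end MainAux

set_option maxHeartbeats 1000000 in
open Real Set Filter Topology in
theorem solution_deriv_estimates (a b : ℝ) (ha : 0 < a) (hb0 : 0 < b)
    (hb : b ≤ (Real.sqrt a / besselI1 (Real.sqrt a))
      * Real.sqrt (2 * besselI0 (Real.sqrt a) - 1) / (besselI0 (Real.sqrt a) - 1))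
    (h : ℝ → ℝ) (hsol : SolvesBVP a b h) :
    (∀ r ∈ Set.Icc (0 : ℝ) 1,
      (2 - 1 / besselI0 (Real.sqrt a))
          * (-(b / Real.sqrt a) * besselI1 (Real.sqrt a * r) / besselI0 (Real.sqrt a))
        ≤ deriv h r ∧ deriv h r ≤ 0) ∧
    AntitoneOn h (Set.Icc (0 : ℝ) 1) := by
  obtain ⟨hC2, hode0, hd0, h10⟩ := hsol
  have hsapos : 0 < Real.sqrt a := Real.sqrt_pos.2 ha
  have hsq : Real.sqrt a * Real.sqrt a = a := Real.mul_self_sqrt ha.le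
  set sa := Real.sqrt a with hsa
  set I0 : ℝ := besselI0 sa with hI0
  have hI0pos : 0 < I0 := besselI0_pos sa
  have hI0gt1 : 1 < I0 := besselI0_gt_one hsapos
  set p₀ : ℝ := (I0 - 1) / I0 with hp₀
  have hp₀pos : 0 < p₀ := div_pos (by linarith) hI0pos
  have hp₀lt1 : p₀ < 1 := by
    rw [hp₀, div_lt_one hI0pos]; linarith
  have hp₀c : 1 - p₀ = 1/I0 := by
    rw [hp₀]; field_simp; ring
  -- h₀ and its derivative
  set h0f : ℝ → ℝ := fun r => (b/a) * (1 - besselI0 (sa * r) / I0) with hh0f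
  set h0d : ℝ → ℝ := fun r => -(b / sa) * besselI1 (sa * r) / I0 with hh0d
  have hD1 : ∀ r : ℝ, HasDerivAt h0f (h0d r) r := fun r => hasDerivAt_h0f a b ha r
  have hD2 : ∀ r : ℝ, HasDerivAt (fun s => s * h0d s) (r * (a * h0f r - b)) r :=
    fun r => hasDerivAt_r_h0d a b ha r
  have hh0fdiff : Differentiable ℝ h0f := fun r => (hD1 r).differentiableAt
  have hh0fcont : Continuous h0f := hh0fdiff.continuous
  -- basic bounds on h0f and h0d
  have hv0ge1 : ∀ r : ℝ, 1 ≤ besselI0 (sa * r) := fun r => besselI0_ge_one _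
  have hh0f_le : ∀ r : ℝ, a * h0f r ≤ b * (1 - 1/I0) := by
    intro r
    rw [hh0f]
    have h1 : a * ((b/a) * (1 - besselI0 (sa * r) / I0)) = b * (1 - besselI0 (sa * r) / I0) := by
      field_simp
    rw [h1]
    have h2 : (1:ℝ)/I0 ≤ besselI0 (sa * r)/I0 := by gcongr ?_ / I0; exact hv0ge1 r
    nlinarith
  have hh0f1 : h0f 1 = 0 := by
    rw [hh0f]
    simp only [mul_one]
    rw [div_self (ne_of_gt hI0pos)]
    ring
  have hh0d_le : ∀ r : ℝ, 0 ≤ r → h0d r ≤ 0 := by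
    intro r hr
    rw [hh0d]
    have h1 := besselI1_nonneg (z := sa * r) (by positivity)
    have hc : -(b/sa) ≤ 0 := by
      have : 0 < b/sa := div_pos hb0 hsapos
      linarith
    exact div_nonpos_of_nonpos_of_nonneg (mul_nonpos_of_nonpos_of_nonneg hc h1) hI0pos.le
  have hh0d_strong : ∀ r : ℝ, 0 ≤ r → h0d r ≤ -(b * r / 2) / I0 := by
    intro r hr
    rw [hh0d]
    have h1 : sa * r / 2 ≤ besselI1 (sa * r) := besselI1_ge (by positivity)
    have h2 : b * r / 2 ≤ (b/sa) * besselI1 (sa * r) := by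
      calc b * r / 2 = (b/sa) * (sa * r / 2) := by field_simp
      _ ≤ (b/sa) * besselI1 (sa * r) := by
          apply mul_le_mul_of_nonneg_left h1 (div_pos hb0 hsapos).le
    have h3 : -(b/sa) * besselI1 (sa * r) ≤ -(b * r / 2) := by linarith
    exact (div_le_div_iff_of_pos_right hI0pos).2 h3
  -- regularity of h
  have hcont : ContinuousOn h (Icc 0 1) := hC2.continuousOn
  set w : ℝ → ℝ := derivWithin h (Icc 0 1) with hw
  have hwc : ContinuousOn w (Icc 0 1) :=
    hC2.continuousOn_derivWithin (uniqueDiffOn_Icc zero_lt_one) (by norm_num)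
  have hweq : ∀ r ∈ Ioo (0:ℝ) 1, w r = deriv h r := by
    intro r hr
    exact derivWithin_of_mem_nhds (Icc_mem_nhds hr.1 hr.2)
  have hdiff : ∀ r ∈ Ioo (0:ℝ) 1, DifferentiableAt ℝ h r := by
    intro r hr
    exact (hC2.contDiffAt (Icc_mem_nhds hr.1 hr.2)).differentiableAt (by norm_num)
  have hdd : DifferentiableOn ℝ (deriv h) (Ioo 0 1) := by
    have h1 : ContDiffOn ℝ 1 (deriv h) (Ioo 0 1) :=
      (hC2.mono Ioo_subset_Icc_self).deriv_of_isOpen isOpen_Ioo (by norm_num)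
    exact h1.differentiableOn (by norm_num)
  have hdd' : ∀ r ∈ Ioo (0:ℝ) 1, DifferentiableAt ℝ (deriv h) r := by
    intro r hr
    exact (hdd r hr).differentiableAt (isOpen_Ioo.mem_nhds hr)
  set P : ℝ → ℝ := fun r => b / Real.sqrt (1 + (deriv h r)^2) with hP
  have hPpos : ∀ r : ℝ, 0 < P r := by
    intro r
    apply div_pos hb0
    apply Real.sqrt_pos.2
    nlinarith [sq_nonneg (deriv h r)]
  have hsqrt_ge1 : ∀ r : ℝ, 1 ≤ Real.sqrt (1 + (deriv h r)^2) := by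
    intro r
    have h1 := Real.sqrt_le_sqrt (show (1:ℝ) ≤ 1 + (deriv h r)^2 by nlinarith [sq_nonneg (deriv h r)])
    rwa [Real.sqrt_one] at h1
  have hPleb : ∀ r : ℝ, P r ≤ b := fun r => div_le_self hb0.le (hsqrt_ge1 r)
  set ψ : ℝ → ℝ := fun r => r * (a * h r - P r) with hψdef
  have hprod : ∀ r ∈ Ioo (0:ℝ) 1, HasDerivAt (fun s => s * deriv h s) (ψ r) r := by
    intro r hr
    have h1 : DifferentiableAt ℝ (fun s => s * deriv h s) r :=
      differentiableAt_fun_id.mul (hdd' r hr)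
    have h2 := h1.hasDerivAt
    have h3 : deriv (fun s => s * deriv h s) r = ψ r := by
      have e := hode0 r hr
      have hr0 : r ≠ 0 := ne_of_gt hr.1
      have h4 : (1/r) * deriv (fun s : ℝ => s * deriv h s) r = a * h r - P r := by
        rw [hP]; simp only []; linarith
      calc deriv (fun s : ℝ => s * deriv h s) r = r * ((1/r) * deriv (fun s : ℝ => s * deriv h s) r) := by
            field_simp
      _ = ψ r := by rw [h4]
    rwa [h3] at h2
  -- tendsto of r * deriv h r at 0+
  have hIoo0 : 𝓝[Ioo (0:ℝ) 1] 0 = 𝓝[>] (0:ℝ) := nhdsWithin_Ioo_eq_nhdsGT zero_lt_one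
  have htend0 : Tendsto (fun r => r * deriv h r) (𝓝[>] (0:ℝ)) (𝓝 0) := by
    have h1 : ContinuousWithinAt (fun r => r * w r) (Icc 0 1) 0 :=
      (continuousOn_id.mul hwc) 0 (left_mem_Icc.2 zero_le_one)
    have h2 : Tendsto (fun r => r * w r) (𝓝[Icc (0:ℝ) 1] 0) (𝓝 0) := by
      have h2a : Tendsto (fun r => r * w r) (𝓝[Icc (0:ℝ) 1] 0) (𝓝 (0 * w 0)) := h1
      simpa using h2a
    have h3 : Tendsto (fun r => r * w r) (𝓝[Ioo (0:ℝ) 1] 0) (𝓝 0) :=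
      h2.mono_left (nhdsWithin_mono 0 Ioo_subset_Icc_self)
    rw [hIoo0] at h3
    apply h3.congr'
    rw [← hIoo0]
    filter_upwards [eventually_mem_nhdsWithin] with s hs
    rw [hweq s hs]
  have htendh0d : Tendsto (fun r => r * h0d r) (𝓝[>] (0:ℝ)) (𝓝 0) := by
    have h1 : ContinuousAt (fun s => s * h0d s) 0 := (hD2 0).differentiableAt.continuousAt
    have h2 : Tendsto (fun s => s * h0d s) (𝓝 0) (𝓝 0) := by
      have h2a : Tendsto (fun s => s * h0d s) (𝓝 0) (𝓝 (0 * h0d 0)) := h1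
      simpa using h2a
    exact h2.mono_left nhdsWithin_le_nhds
  -- Step A : h ≥ 0 on [0,1]
  have hstepA : ∀ r ∈ Icc (0:ℝ) 1, 0 ≤ h r := by
    apply max_principle ha hcont hprod ?_ htend0 (le_of_eq h10.symm)
    intro r hr
    have := hPpos r
    have h5 : ψ r = a * r * h r - r * P r := by rw [hψdef]; ring
    nlinarith [mul_pos hr.1 (hPpos r)]
  -- Step B : h ≤ b/a on [0,1]
  have hstepB : ∀ r ∈ Icc (0:ℝ) 1, a * h r ≤ b := by
    have hmp := max_principle (z := fun r => b/a - h r) (ψ := fun r => -(ψ r)) ha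
      (continuousOn_const.sub hcont) ?_ ?_ ?_ ?_
    · intro r hr
      have := hmp r hr
      have h5 : 0 ≤ b/a - h r := this
      calc a * h r ≤ a * (b/a) := by
            apply mul_le_mul_of_nonneg_left (by linarith) ha.le
      _ = b := by field_simp
    · intro r hr
      have hder : ∀ s : ℝ, deriv (fun r => b/a - h r) s = -(deriv h s) := fun s => deriv_const_sub _
      have heq : (fun s => s * deriv (fun r => b/a - h r) s) = fun s => -(s * deriv h s) := by
        funext s
        rw [hder s]
        ring
      rw [heq]
      exact (hprod r hr).neg
    · intro r hr
      show -(ψ r) ≤ a * r * (b/a - h r)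
      have h5 : P r ≤ b := hPleb r
      have h6 : -(ψ r) = r * P r - a * r * h r := by rw [hψdef]; ring
      have h7 : a * r * (b/a - h r) = r * b - a * r * h r := by field_simp
      rw [h6, h7]
      have : r * P r ≤ r * b := by
        apply mul_le_mul_of_nonneg_left h5 hr.1.le
      linarith
    · have heq : (fun s : ℝ => s * deriv (fun r => b/a - h r) s) = fun s => -(s * deriv h s) := by
        funext s
        rw [deriv_const_sub]
        ring
      rw [heq]
      have := htend0.neg
      rw [neg_zero] at this
      exact this
    · simp only [h10, sub_zero]
      positivity
  -- pre-comparison: |deriv h| ≤ b r / 2 on (0,1)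
  have hwub : ∀ r ∈ Ioo (0:ℝ) 1, r * deriv h r ≤ b * r^2 / 2 := by
    have hcmp := cmp_nonneg (φ := fun r => b * r^2/2 - r * deriv h r)
      (φ' := fun r => b * r - ψ r) ?_ ?_ ?_
    · intro r hr
      have h9 : 0 ≤ b * r^2/2 - r * deriv h r := hcmp r hr
      linarith
    · intro r hr
      have h1 : HasDerivAt (fun r : ℝ => b * r^2/2) (b * r) r := by
        have h1a := ((hasDerivAt_pow 2 r).const_mul b).div_const 2
        refine h1a.congr_deriv ?_
        push_cast
        ring
      exact h1.sub (hprod r hr)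
    · intro r hr
      show 0 ≤ b * r - ψ r
      have h5 : a * h r ≤ b := hstepB r (Ioo_subset_Icc_self hr)
      have h6 : 0 < P r := hPpos r
      have h7 : ψ r = r * (a * h r) - r * P r := by rw [hψdef]; ring
      have h8 : r * (a * h r) ≤ r * b := mul_le_mul_of_nonneg_left h5 hr.1.le
      have h9 : 0 < r * P r := mul_pos hr.1 h6
      nlinarith
    · have h1 : Tendsto (fun r : ℝ => b * r^2/2) (𝓝[>] (0:ℝ)) (𝓝 0) := by
        have : Tendsto (fun r : ℝ => b * r^2/2) (𝓝 0) (𝓝 (b * 0^2/2)) :=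
          (continuous_const.mul (continuous_pow 2)).div_const 2 |>.tendsto 0
        simp only [ne_eq, OfNat.ofNat_ne_zero, not_false_eq_true, zero_pow, mul_zero,
          zero_div] at this
        exact this.mono_left nhdsWithin_le_nhds
      simpa using h1.sub htend0
  have hwlb : ∀ r ∈ Ioo (0:ℝ) 1, -(b * r^2/2) ≤ r * deriv h r := by
    have hcmp := cmp_nonneg (φ := fun r => r * deriv h r + b * r^2/2)
      (φ' := fun r => ψ r + b * r) ?_ ?_ ?_
    · intro r hr
      have h9 : 0 ≤ r * deriv h r + b * r^2/2 := hcmp r hr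
      linarith
    · intro r hr
      have h1 : HasDerivAt (fun r : ℝ => b * r^2/2) (b * r) r := by
        have h1a := ((hasDerivAt_pow 2 r).const_mul b).div_const 2
        refine h1a.congr_deriv ?_
        push_cast
        ring
      exact (hprod r hr).add h1
    · intro r hr
      show 0 ≤ ψ r + b * r
      have h5 : 0 ≤ h r := hstepA r (Ioo_subset_Icc_self hr)
      have h6 : P r ≤ b := hPleb r
      have h7 : ψ r = r * (a * h r) - r * P r := by rw [hψdef]; ring
      have h8 : r * P r ≤ r * b := mul_le_mul_of_nonneg_left h6 hr.1.le
      nlinarith [mul_nonneg hr.1.le (mul_nonneg ha.le h5)]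
    · have h1 : Tendsto (fun r : ℝ => b * r^2/2) (𝓝[>] (0:ℝ)) (𝓝 0) := by
        have : Tendsto (fun r : ℝ => b * r^2/2) (𝓝 0) (𝓝 (b * 0^2/2)) :=
          (continuous_const.mul (continuous_pow 2)).div_const 2 |>.tendsto 0
        simp only [ne_eq, OfNat.ofNat_ne_zero, not_false_eq_true, zero_pow, mul_zero,
          zero_div] at this
        exact this.mono_left nhdsWithin_le_nhds
      simpa using htend0.add h1
  have habs : ∀ r ∈ Ioo (0:ℝ) 1, |deriv h r| ≤ b/2 := by
    intro r hr
    have h1 := hwub r hr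
    have h2 := hwlb r hr
    rw [abs_le]
    constructor
    · have h3 : 0 ≤ r * (deriv h r + b * r/2) := by nlinarith
      have h4 : 0 ≤ deriv h r + b * r/2 := (mul_nonneg_iff_of_pos_left hr.1).1 h3
      nlinarith [hr.2, hb0]
    · have h3 : 0 ≤ r * (b * r/2 - deriv h r) := by nlinarith
      have h4 : 0 ≤ b * r/2 - deriv h r := (mul_nonneg_iff_of_pos_left hr.1).1 h3
      nlinarith [hr.2, hb0]
  -- b/2 ≤ K and P ≥ p₀ b
  have hKb : b/2 ≤ Real.sqrt (2*I0 - 1) / (I0 - 1) := by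
    have hI1ge : sa/2 ≤ besselI1 sa := besselI1_ge hsapos.le
    have hI1pos : 0 < besselI1 sa := lt_of_lt_of_le (div_pos hsapos two_pos) hI1ge
    have h1 : sa / besselI1 sa ≤ 2 := by
      rw [div_le_iff₀ hI1pos]
      linarith
    have h2 : (sa / besselI1 sa) * Real.sqrt (2*I0-1) / (I0-1)
        ≤ 2 * Real.sqrt (2*I0-1) / (I0-1) := by
      exact (div_le_div_iff_of_pos_right (show (0:ℝ) < I0 - 1 by linarith)).2
        (mul_le_mul_of_nonneg_right h1 (Real.sqrt_nonneg _))
    have h3 : b ≤ 2 * Real.sqrt (2*I0-1) / (I0-1) := le_trans hb h2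
    have h4 : 2 * Real.sqrt (2*I0-1) / (I0-1) = 2 * (Real.sqrt (2*I0-1)/(I0-1)) := by ring
    linarith [h3, h4]
  have hPlb : ∀ r ∈ Ioo (0:ℝ) 1, p₀ * b ≤ P r := by
    intro r hr
    have hq := habs r hr
    set q := deriv h r with hqdef
    have hq2 : q^2 ≤ (2*I0-1)/(I0-1)^2 := by
      have h1 : |q| ≤ Real.sqrt (2*I0-1)/(I0-1) := le_trans hq hKb
      have h2 : q^2 = |q|^2 := (sq_abs q).symm
      rw [h2]
      calc |q|^2 ≤ (Real.sqrt (2*I0-1)/(I0-1))^2 := by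
            apply pow_le_pow_left₀ (abs_nonneg q) h1
      _ = (2*I0-1)/(I0-1)^2 := by
            rw [div_pow, Real.sq_sqrt (by linarith)]
    have h3 : 1 + q^2 ≤ (I0/(I0-1))^2 := by
      have hne : (I0 - 1 : ℝ) ≠ 0 := by linarith
      have e1 : (I0/(I0-1))^2 = I0^2/(I0-1)^2 := div_pow I0 (I0-1) 2
      rw [e1, show (I0:ℝ)^2 = (I0-1)^2 + (2*I0-1) by ring, add_div,
        div_self (pow_ne_zero 2 hne)]
      linarith
    have h4 : Real.sqrt (1 + q^2) ≤ I0/(I0-1) := by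
      calc Real.sqrt (1 + q^2) ≤ Real.sqrt ((I0/(I0-1))^2) := Real.sqrt_le_sqrt h3
      _ = I0/(I0-1) := Real.sqrt_sq (div_nonneg hI0pos.le (by linarith))
    have h5 : 0 < Real.sqrt (1 + q^2) := Real.sqrt_pos.2 (by nlinarith [sq_nonneg q])
    show p₀ * b ≤ b / Real.sqrt (1 + q^2)
    have h6 : b / (I0/(I0-1)) ≤ b / Real.sqrt (1 + q^2) :=
      div_le_div_of_nonneg_left hb0.le h5 h4
    calc p₀ * b = b / (I0/(I0-1)) := by
          rw [hp₀]
          field_simp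
    _ ≤ b / Real.sqrt (1 + q^2) := h6
  -- Step C : h ≤ h0f on [0,1]
  have hstepC : ∀ r ∈ Icc (0:ℝ) 1, h r ≤ h0f r := by
    have hmp := max_principle (z := fun r => h0f r - h r)
      (ψ := fun r => r * (a * h0f r - b) - ψ r) ha ?_ ?_ ?_ ?_ ?_
    · intro r hr
      have h9 : 0 ≤ h0f r - h r := hmp r hr
      linarith
    · exact hh0fcont.continuousOn.sub hcont
    · intro r hr
      have E : (fun s => s * deriv (fun r => h0f r - h r) s)
          =ᶠ[𝓝 r] (fun s => s * h0d s - s * deriv h s) := by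
        filter_upwards [isOpen_Ioo.mem_nhds hr] with s hs
        rw [deriv_fun_sub ((hD1 s).differentiableAt) (hdiff s hs), (hD1 s).deriv]
        ring
      exact ((hD2 r).sub (hprod r hr)).congr_of_eventuallyEq E
    · intro r hr
      show r * (a * h0f r - b) - ψ r ≤ a * r * (h0f r - h r)
      have h7 : ψ r = r * (a * h r) - r * P r := by rw [hψdef]; ring
      have h8 : r * P r ≤ r * b := mul_le_mul_of_nonneg_left (hPleb r) hr.1.le
      have h9 : r * (a * h0f r - b) - ψ r
          = a * r * (h0f r - h r) - (r * b - r * P r) := by rw [h7]; ring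
      linarith
    · have base : Tendsto (fun r => r * h0d r - r * deriv h r) (𝓝[>] (0:ℝ)) (𝓝 0) := by
        simpa using htendh0d.sub htend0
      apply base.congr'
      rw [← hIoo0]
      filter_upwards [eventually_mem_nhdsWithin] with s hs
      rw [deriv_fun_sub ((hD1 s).differentiableAt) (hdiff s hs), (hD1 s).deriv]
      ring
    · show 0 ≤ h0f 1 - h 1
      rw [hh0f1, h10]
      norm_num
  -- Step D : p₀ * h0f ≤ h on [0,1]
  have hstepD : ∀ r ∈ Icc (0:ℝ) 1, p₀ * h0f r ≤ h r := by
    have hmp := max_principle (z := fun r => h r - p₀ * h0f r)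
      (ψ := fun r => ψ r - p₀ * (r * (a * h0f r - b))) ha ?_ ?_ ?_ ?_ ?_
    · intro r hr
      have h9 : 0 ≤ h r - p₀ * h0f r := hmp r hr
      linarith
    · exact hcont.sub (hh0fcont.continuousOn.const_smul p₀)
    · intro r hr
      have E : (fun s => s * deriv (fun r => h r - p₀ * h0f r) s)
          =ᶠ[𝓝 r] (fun s => s * deriv h s - p₀ * (s * h0d s)) := by
        filter_upwards [isOpen_Ioo.mem_nhds hr] with s hs
        rw [deriv_fun_sub (hdiff s hs) (((hD1 s).const_mul p₀).differentiableAt),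
          ((hD1 s).const_mul p₀).deriv]
        ring
      exact ((hprod r hr).sub ((hD2 r).const_mul p₀)).congr_of_eventuallyEq E
    · intro r hr
      show ψ r - p₀ * (r * (a * h0f r - b)) ≤ a * r * (h r - p₀ * h0f r)
      have h7 : ψ r = r * (a * h r) - r * P r := by rw [hψdef]; ring
      have h9 : r * (p₀ * b) ≤ r * P r := mul_le_mul_of_nonneg_left (hPlb r hr) hr.1.le
      have h8 : ψ r - p₀ * (r * (a * h0f r - b))
          = a * r * (h r - p₀ * h0f r) - (r * P r - r * (p₀ * b)) := by rw [h7]; ring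
      linarith
    · have base : Tendsto (fun r => r * deriv h r - p₀ * (r * h0d r)) (𝓝[>] (0:ℝ)) (𝓝 0) := by
        simpa using htend0.sub (htendh0d.const_mul p₀)
      apply base.congr'
      rw [← hIoo0]
      filter_upwards [eventually_mem_nhdsWithin] with s hs
      rw [deriv_fun_sub (hdiff s hs) (((hD1 s).const_mul p₀).differentiableAt),
        ((hD1 s).const_mul p₀).deriv]
      ring
    · show 0 ≤ h 1 - p₀ * h0f 1
      rw [h10, hh0f1]
      norm_num
  -- polynomial derivative helper
  have hpoly : ∀ (c : ℝ) (r : ℝ), HasDerivAt (fun r : ℝ => c * (b * r^2/2)) (c * (b * r)) r := by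
    intro c r
    have h1a := (((hasDerivAt_pow 2 r).const_mul b).div_const 2).const_mul c
    refine h1a.congr_deriv ?_
    push_cast
    ring
  have hpolytend : ∀ c : ℝ, Tendsto (fun r : ℝ => c * (b * r^2/2)) (𝓝[>] (0:ℝ)) (𝓝 0) := by
    intro c
    have h1 : Tendsto (fun r : ℝ => c * (b * r^2/2)) (𝓝 0) (𝓝 (c * (b * 0^2/2))) :=
      ((((continuous_const.mul (continuous_pow 2)).div_const 2).const_smul c).tendsto 0)
    have h2 : c * (b * (0:ℝ)^2/2) = 0 := by norm_num
    rw [h2] at h1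
    exact h1.mono_left nhdsWithin_le_nhds
  -- Step E : deriv h ≤ 0 on (0,1)
  have hstepE : ∀ r ∈ Ioo (0:ℝ) 1, deriv h r ≤ 0 := by
    have hcmp := cmp_nonneg
      (φ := fun r => (r * h0d r + (1 - p₀) * (b * r^2/2)) - r * deriv h r)
      (φ' := fun r => (r * (a * h0f r - b) + (1 - p₀) * (b * r)) - ψ r) ?_ ?_ ?_
    · intro r hr
      have h9 : 0 ≤ (r * h0d r + (1 - p₀) * (b * r^2/2)) - r * deriv h r := hcmp r hr
      have h10' : h0d r ≤ -(b * r/2)/I0 := hh0d_strong r hr.1.le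
      have h11 : r * h0d r ≤ r * (-(b * r/2)/I0) := mul_le_mul_of_nonneg_left h10' hr.1.le
      have h12 : r * (-(b * r/2)/I0) + (1 - p₀) * (b * r^2/2) = 0 := by
        rw [hp₀c]; field_simp; ring
      have h13 : r * deriv h r ≤ 0 := by linarith
      by_contra hcon
      push_neg at hcon
      nlinarith [hr.1]
    · intro r hr
      exact ((hD2 r).add (hpoly (1 - p₀) r)).sub (hprod r hr)
    · intro r hr
      show 0 ≤ (r * (a * h0f r - b) + (1 - p₀) * (b * r)) - ψ r
      have h7 : ψ r = r * (a * h r) - r * P r := by rw [hψdef]; ring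
      have hC : h r ≤ h0f r := hstepC r (Ioo_subset_Icc_self hr)
      have h8 : r * (a * h r) ≤ r * (a * h0f r) :=
        mul_le_mul_of_nonneg_left (mul_le_mul_of_nonneg_left hC ha.le) hr.1.le
      have h9 : r * (p₀ * b) ≤ r * P r := mul_le_mul_of_nonneg_left (hPlb r hr) hr.1.le
      have h10' : (r * (a * h0f r - b) + (1 - p₀) * (b * r)) - ψ r
          = (r * (a * h0f r) - r * (a * h r)) + (r * P r - r * (p₀ * b)) := by
        rw [h7]; ring
      linarith
    · have base := (htendh0d.add (hpolytend (1 - p₀))).sub htend0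
      simpa using base
  -- Step F : lower bound on (0,1)
  have hstepF : ∀ r ∈ Ioo (0:ℝ) 1, (2 - 1/I0) * h0d r ≤ deriv h r := by
    have hcmp := cmp_nonneg
      (φ := fun r => r * deriv h r - (p₀ * (r * h0d r) + (p₀ - 1) * (b * r^2/2)))
      (φ' := fun r => ψ r - (p₀ * (r * (a * h0f r - b)) + (p₀ - 1) * (b * r))) ?_ ?_ ?_
    · intro r hr
      have h9 : 0 ≤ r * deriv h r - (p₀ * (r * h0d r) + (p₀ - 1) * (b * r^2/2)) := hcmp r hr
      have hid : r * deriv h r - (p₀ * (r * h0d r) + (p₀ - 1) * (b * r^2/2))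
          = r * (deriv h r - (p₀ * h0d r + (p₀ - 1) * (b * r/2))) := by ring
      rw [hid] at h9
      have h13 : 0 ≤ deriv h r - (p₀ * h0d r + (p₀ - 1) * (b * r/2)) :=
        (mul_nonneg_iff_of_pos_left hr.1).1 h9
      have e1 : p₀ - 1 = -(1/I0) := by
        rw [hp₀]; field_simp; ring
      have e2 : (p₀ - 1) * (b * r/2) = -(b * r/2)/I0 := by rw [e1]; ring
      have h10' : h0d r ≤ -(b * r/2)/I0 := hh0d_strong r hr.1.le
      have h14 : h0d r ≤ (p₀ - 1) * (b * r/2) := by rw [e2]; exact h10'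
      have e3 : (2 - 1/I0) = 1 + p₀ := by
        rw [hp₀]; field_simp; ring
      have h15 : (2 - 1/I0) * h0d r = p₀ * h0d r + h0d r := by rw [e3]; ring
      linarith
    · intro r hr
      exact (hprod r hr).sub (((hD2 r).const_mul p₀).add (hpoly (p₀ - 1) r))
    · intro r hr
      show 0 ≤ ψ r - (p₀ * (r * (a * h0f r - b)) + (p₀ - 1) * (b * r))
      have h7 : ψ r = r * (a * h r) - r * P r := by rw [hψdef]; ring
      have hD : p₀ * h0f r ≤ h r := hstepD r (Ioo_subset_Icc_self hr)
      have h8 : r * (a * (p₀ * h0f r)) ≤ r * (a * h r) :=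
        mul_le_mul_of_nonneg_left (mul_le_mul_of_nonneg_left hD ha.le) hr.1.le
      have h9 : r * P r ≤ r * b := mul_le_mul_of_nonneg_left (hPleb r) hr.1.le
      have h10' : ψ r - (p₀ * (r * (a * h0f r - b)) + (p₀ - 1) * (b * r))
          = (r * (a * h r) - r * (a * (p₀ * h0f r))) + (r * b - r * P r) := by
        rw [h7]; ring
      linarith
    · have base := htend0.sub ((htendh0d.const_mul p₀).add (hpolytend (p₀ - 1)))
      simpa using base
  -- continuity of h0d at 1
  have hh0dcont1 : ContinuousAt h0d 1 := by
    have c1 : ContinuousAt (fun s : ℝ => (s * h0d s)/s) 1 := by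
      apply ContinuousAt.div ((hD2 1).differentiableAt.continuousAt) continuousAt_id
      norm_num
    have c2 : (fun s : ℝ => (s * h0d s)/s) =ᶠ[𝓝 (1:ℝ)] h0d := by
      filter_upwards [eventually_ne_nhds (show (1:ℝ) ≠ 0 by norm_num)] with s hs
      field_simp
    have c3 := c1.congr c2
    have c4 : (1 * h0d 1)/1 = h0d 1 := by ring
    simpa [c4] using c3
  -- limit behaviour at r = 1 for w
  have hIoo1 : 𝓝[Ioo (0:ℝ) 1] 1 = 𝓝[<] (1:ℝ) := nhdsWithin_Ioo_eq_nhdsLT zero_lt_one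
  have hwt1 : Tendsto (deriv h) (𝓝[Ioo (0:ℝ) 1] 1) (𝓝 (w 1)) := by
    have h1 : ContinuousWithinAt w (Icc 0 1) 1 := hwc 1 (right_mem_Icc.2 zero_le_one)
    have h2 : Tendsto w (𝓝[Ioo (0:ℝ) 1] 1) (𝓝 (w 1)) :=
      h1.mono_left (nhdsWithin_mono 1 Ioo_subset_Icc_self)
    apply h2.congr'
    filter_upwards [eventually_mem_nhdsWithin] with s hs
    exact hweq s hs
  have hNB : (𝓝[Ioo (0:ℝ) 1] 1).NeBot := by
    rw [hIoo1]
    infer_instance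
  have hw1le : w 1 ≤ 0 := by
    apply le_of_tendsto hwt1
    filter_upwards [eventually_mem_nhdsWithin] with s hs
    exact hstepE s hs
  have hw1ge : (2 - 1/I0) * h0d 1 ≤ w 1 := by
    have hbt : Tendsto (fun s => (2 - 1/I0) * h0d s) (𝓝[Ioo (0:ℝ) 1] 1)
        (𝓝 ((2 - 1/I0) * h0d 1)) :=
      ((hh0dcont1.const_smul (2 - 1/I0)).tendsto).mono_left nhdsWithin_le_nhds
    apply le_of_tendsto_of_tendsto hbt hwt1
    filter_upwards [eventually_mem_nhdsWithin] with s hs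
    exact hstepF s hs
  have hfactor_nonneg : 0 ≤ 2 - 1/I0 := by
    have : 1/I0 < 1 := by
      rw [div_lt_one hI0pos]; linarith
    linarith
  constructor
  · intro r hr
    rcases eq_or_lt_of_le hr.1 with h0r | h0r
    · -- r = 0
      have hr0 : r = 0 := h0r.symm
      subst hr0
      have hI10 : besselI1 (sa * 0) = 0 := by rw [mul_zero, besselI1_zero]
      constructor
      · show (2 - 1/I0) * (-(b / sa) * besselI1 (sa * 0) / I0) ≤ deriv h 0
        rw [hI10, hd0]
        simp
      · rw [hd0]
    · rcases eq_or_lt_of_le hr.2 with h1r | h1r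
      · -- r = 1
        subst h1r
        by_cases hdif : DifferentiableAt ℝ h 1
        · have hw1 : w 1 = deriv h 1 :=
            (hdif.hasDerivAt.hasDerivWithinAt).derivWithin
              (uniqueDiffOn_Icc zero_lt_one 1 (right_mem_Icc.2 zero_le_one))
          constructor
          · show (2 - 1/I0) * h0d 1 ≤ deriv h 1
            rw [← hw1]
            exact hw1ge
          · rw [← hw1]; exact hw1le
        · rw [deriv_zero_of_not_differentiableAt hdif]
          constructor
          · show (2 - 1/I0) * h0d 1 ≤ (0:ℝ)
            exact mul_nonpos_of_nonneg_of_nonpos hfactor_nonneg (hh0d_le 1 zero_le_one)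
          · exact le_rfl
      · -- interior
        have hrI : r ∈ Ioo (0:ℝ) 1 := ⟨h0r, h1r⟩
        exact ⟨hstepF r hrI, hstepE r hrI⟩
  · apply antitoneOn_of_deriv_nonpos (convex_Icc 0 1) hcont
    · intro x hx
      rw [interior_Icc] at hx
      exact (hdiff x hx).differentiableWithinAt
    · intro x hx
      rw [interior_Icc] at hx
      exact hstepE x hx
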